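/- Let H be a digraph on a finite vertex set V with n = |V| vertices, equipped with an edge-weight function w : E → ℕ satisfying 1 ≤ w(e) < ω for every edge e, where ω ∈ ℕ, and let d ≥ 1 be an integer divisible by 2ω. Then there exists a set S ⊆ V such that every SCC of H ∖ E(S) has weighted diameter at most d, and, letting 𝒞 denote the collection of vertex sets of the SCCs of H ∖ E(S), |S| ≤ (4·ω·lg n / d) · Σ_{C ∈ 𝒞} |C|·(lg n − lg |C|). -/

import Mathlib

variable {V : Type*}

/-- Unweighted walk distance in the digraph with edge relation `E`:
the minimum number of edges of a walk from `u` to `v`, `∞` if none exists. -/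
noncomputable def ddist (E : V → V → Prop) (u v : V) : ℕ∞ :=
  sInf { n : ℕ∞ | ∃ l : List V, l.Chain' E ∧ l.head? = some u ∧ l.getLast? = some v ∧
    n = ((l.length - 1 : ℕ) : ℕ∞) }

/-- Weighted walk distance: the minimum total weight of a walk from `u` to `v`. -/
noncomputable def wdist (E : V → V → Prop) (w : V → V → ℕ) (u v : V) : ℕ∞ :=
  sInf { n : ℕ∞ | ∃ l : List V, l.Chain' E ∧ l.head? = some u ∧ l.getLast? = some v ∧
    n = ((((l.zip l.tail).map fun p => w p.1 p.2).sum : ℕ) : ℕ∞) }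

/-- The digraph `H ∖ E(S)`: edges of `E` with neither endpoint in `S`. -/
def edgesAvoiding (E : V → V → Prop) (S : Set V) : V → V → Prop :=
  fun a b => E a b ∧ a ∉ S ∧ b ∉ S

/-- The strongly connected component of `v`: vertices mutually reachable with `v`. -/
def scc (E : V → V → Prop) (v : V) : Set V :=
  {u | Relation.ReflTransGen E u v ∧ Relation.ReflTransGen E v u}

/-- `S` is a `q`-quality separator: every SCC of `H ∖ E(S)` has at most `|V| - q·|S|` vertices. -/
def QualSep [Fintype V] (E : V → V → Prop) (q : ℝ) (S : Set V) : Prop :=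
  ∀ v : V, ((scc (edgesAvoiding E S) v).ncard : ℝ) ≤ (Fintype.card V : ℝ) - q * S.ncard

/-- Edge relation of the induced subdigraph on `C`. -/
def induced (E : V → V → Prop) (C : Set V) : V → V → Prop :=
  fun a b => E a b ∧ a ∈ C ∧ b ∈ C

/-- The (finite) collection of vertex sets of the SCCs of the digraph. -/
noncomputable def sccs [Fintype V] (E : V → V → Prop) : Finset (Set V) :=
  letI := Classical.decEq (Set V)
  Finset.image (fun v => scc E v) Finset.univ

/-! ### Auxiliary lemmas -/

open List Relation

section Helpers

def wt (w : V → V → ℕ) (l : List V) : ℕ := ((l.zip l.tail).map fun p => w p.1 p.2).sum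

lemma wt_cons (w : V → V → ℕ) (a b : V) (l : List V) :
    wt w (a :: b :: l) = w a b + wt w (b :: l) := by simp [wt]

lemma wdist_le {E : V → V → Prop} {w : V → V → ℕ} {u v : V} {l : List V}
    (hc : l.Chain' E) (hh : l.head? = some u) (hl : l.getLast? = some v) :
    wdist E w u v ≤ (wt w l : ℕ∞) :=
  sInf_le ⟨l, hc, hh, hl, rfl⟩

lemma wdist_self_le_zero (E : V → V → Prop) (w : V → V → ℕ) (u : V) :
    wdist E w u u ≤ 0 := by
  have := wdist_le (E := E) (w := w) (l := [u]) (List.isChain_singleton u) rfl rfl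
  simpa [wt] using this

lemma wdist_le_iff {E : V → V → Prop} {w : V → V → ℕ} {u v : V} {c : ℕ} :
    wdist E w u v ≤ (c : ℕ∞) ↔
      ∃ l : List V, l.Chain' E ∧ l.head? = some u ∧ l.getLast? = some v ∧ wt w l ≤ c := by
  constructor
  · intro h
    by_contra hcon
    push_neg at hcon
    have hge : ((c + 1 : ℕ) : ℕ∞) ≤ wdist E w u v := by
      apply le_sInf
      rintro x ⟨l, hc, hh, hl, rfl⟩
      have := hcon l hc hh hl
      exact_mod_cast Nat.succ_le_of_lt this
    have : ((c + 1 : ℕ) : ℕ∞) ≤ (c : ℕ∞) := hge.trans h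
    exact absurd (by exact_mod_cast this) (by omega)
  · rintro ⟨l, hc, hh, hl, hwt⟩
    exact (wdist_le hc hh hl).trans (by exact_mod_cast hwt)

lemma wt_append (w : V → V → ℕ) (x : V) (t : List V) :
    ∀ l₁ : List V, l₁.getLast? = some x → wt w (l₁ ++ t) = wt w l₁ + wt w (x :: t)
  | [], h => by simp at h
  | [a], h => by
      simp only [List.getLast?_singleton, Option.some_inj] at h
      subst h; simp [wt]
  | a :: b :: r, h => by
      rw [List.getLast?_cons_cons] at h
      have ih := wt_append w x t (b :: r) h
      simp only [List.cons_append] at *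
      rw [wt_cons, wt_cons, ih, Nat.add_assoc]

lemma chain_head_reach {G : V → V → Prop} :
    ∀ (l : List V) (u : V), l.Chain' G → l.head? = some u → ∀ x ∈ l, ReflTransGen G u x
  | [], u, _, hh => by simp at hh
  | a :: t, u, hc, hh => by
      simp only [List.head?_cons, Option.some_inj] at hh
      subst hh
      intro x hx
      rcases List.mem_cons.mp hx with rfl | hx
      · exact ReflTransGen.refl
      · match t, hx with
        | b :: t', hx =>
          rcases List.isChain_cons_cons.mp hc with ⟨hab, hc'⟩
          exact ReflTransGen.head hab (chain_head_reach (b :: t') b hc' rfl x hx)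

lemma chain_last_reach {G : V → V → Prop} :
    ∀ (l : List V) (v : V), l.Chain' G → l.getLast? = some v → ∀ x ∈ l, ReflTransGen G x v
  | [], v, _, hh => by simp at hh
  | [a], v, _, hh => by
      simp only [List.getLast?_singleton, Option.some_inj] at hh
      subst hh; intro x hx; simp at hx; subst hx; exact ReflTransGen.refl
  | a :: b :: t, v, hc, hh => by
      rw [List.getLast?_cons_cons] at hh
      rcases List.isChain_cons_cons.mp hc with ⟨hab, hc'⟩
      intro x hx
      rcases List.mem_cons.mp hx with rfl | hx
      · exact ReflTransGen.head hab (chain_last_reach (b :: t) v hc' hh b (by simp))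
      · exact chain_last_reach (b :: t) v hc' hh x hx

lemma chain'_restrict {G : V → V → Prop} {C : Set V} {l : List V}
    (hc : l.Chain' G) (hm : ∀ x ∈ l, x ∈ C) :
    l.Chain' (fun a b => G a b ∧ a ∈ C ∧ b ∈ C) := by
  induction l with
  | nil => exact List.isChain_nil
  | cons a t ih =>
      match t with
      | [] => exact List.isChain_singleton a
      | b :: t' =>
          rcases List.isChain_cons_cons.mp hc with ⟨hab, hc'⟩
          exact List.isChain_cons_cons.mpr ⟨⟨hab, hm a (by simp), hm b (by simp)⟩,
            ih hc' (fun x hx => hm x (List.mem_cons_of_mem a hx))⟩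

lemma wdist_triangle (E : V → V → Prop) (w : V → V → ℕ) (u x v : V) :
    wdist E w u v ≤ wdist E w u x + wdist E w x v := by
  rcases eq_or_ne (wdist E w u x) ⊤ with h1 | h1
  · simp [h1]
  rcases eq_or_ne (wdist E w x v) ⊤ with h2 | h2
  · simp [h2]
  obtain ⟨c₁, hc₁⟩ := WithTop.ne_top_iff_exists.mp h1
  obtain ⟨c₂, hc₂⟩ := WithTop.ne_top_iff_exists.mp h2
  obtain ⟨l₁, hch₁, hh₁, hl₁, hw₁⟩ := wdist_le_iff.mp (le_of_eq hc₁.symm)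
  obtain ⟨l₂, hch₂, hh₂, hl₂, hw₂⟩ := wdist_le_iff.mp (le_of_eq hc₂.symm)
  obtain ⟨t, rfl⟩ : ∃ t, l₂ = x :: t := by
    cases l₂ with
    | nil => simp at hh₂
    | cons a t => simp only [List.head?_cons, Option.some_inj] at hh₂; exact ⟨t, by rw [hh₂]⟩
  have hl₁ne : l₁ ≠ [] := by rintro rfl; simp at hh₁
  have key : wdist E w u v ≤ ((wt w l₁ + wt w (x :: t) : ℕ) : ℕ∞) := by
    have hchain : (l₁ ++ t).Chain' E := by
      apply List.IsChain.append hch₁ (List.isChain_cons.mp hch₂).2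
      intro p hp q hq
      rw [hl₁, Option.mem_def, Option.some_inj] at hp
      subst hp
      exact (List.isChain_cons.mp hch₂).1 q hq
    have hhead : (l₁ ++ t).head? = some u := by
      rw [List.head?_append_of_ne_nil _ hl₁ne]; exact hh₁
    have hlast : (l₁ ++ t).getLast? = some v := by
      match t, hl₂ with
      | [], hl₂ => simp only [List.getLast?_singleton, Option.some_inj] at hl₂; subst hl₂
                   simp [hl₁]
      | b :: t', hl₂ =>
          rw [List.getLast?_append_of_ne_nil _ (by simp)]
          rw [List.getLast?_cons_cons] at hl₂; exact hl₂
    have := wdist_le (w := w) hchain hhead hlast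
    rwa [wt_append w x t l₁ hl₁] at this
  calc wdist E w u v ≤ _ := key
    _ ≤ ((c₁ + c₂ : ℕ) : ℕ∞) := by exact_mod_cast Nat.add_le_add hw₁ hw₂
    _ = wdist E w u x + wdist E w x v := by rw [← hc₁, ← hc₂]; push_cast; rfl

lemma wdist_le_of_rel {E : V → V → Prop} {w : V → V → ℕ} {x y : V} (h : E x y) :
    wdist E w x y ≤ (w x y : ℕ∞) := by
  have := wdist_le (E := E) (w := w) (l := [x, y]) (List.isChain_pair.mpr h) rfl rfl
  simpa [wt] using this

lemma mem_scc_self (E : V → V → Prop) (v : V) : v ∈ scc E v :=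
  ⟨ReflTransGen.refl, ReflTransGen.refl⟩

lemma scc_eq_of_mem {E : V → V → Prop} {u v : V} (h : u ∈ scc E v) : scc E u = scc E v := by
  obtain ⟨huv, hvu⟩ := h
  ext x
  exact ⟨fun ⟨h1, h2⟩ => ⟨h1.trans huv, hvu.trans h2⟩,
    fun ⟨h1, h2⟩ => ⟨h1.trans hvu, huv.trans h2⟩⟩

lemma scc_eq_singleton {E : V → V → Prop} {v : V} (h : ∀ y, ¬ E y v) : scc E v = {v} := by
  ext u
  simp only [Set.mem_singleton_iff]
  constructor
  · rintro ⟨huv, -⟩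
    rcases huv.cases_tail with h' | ⟨c, -, hcv⟩
    · exact h'.symm
    · exact absurd hcv (h c)
  · rintro rfl; exact mem_scc_self _ _

lemma reach_closed {G : V → V → Prop} {B : Set V}
    (h : ∀ x y, G x y → x ∈ B → y ∈ B) {x z : V} (hr : ReflTransGen G x z) (hx : x ∈ B) :
    z ∈ B := by
  induction hr with
  | refl => exact hx
  | tail _ hcz ih => exact h _ _ hcz ih

lemma reach_closed' {G : V → V → Prop} {B : Set V}
    (h : ∀ x y, G x y → y ∈ B → x ∈ B) {x z : V} (hr : ReflTransGen G x z) (hz : z ∈ B) :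
    x ∈ B := by
  induction hr with
  | refl => exact hz
  | tail _ hcz ih => exact ih (h _ _ hcz hz)

lemma reach_transfer {G₁ G₂ : V → V → Prop} {P : V → Prop} {t : V}
    (hP : ∀ x y, P x → G₁ x y → ReflTransGen G₁ y t → P y ∧ G₂ x y) :
    ∀ x, P x → ReflTransGen G₁ x t → ReflTransGen G₂ x t := by
  intro x hx hr
  induction hr using ReflTransGen.head_induction_on with
  | refl => exact ReflTransGen.refl
  | head h' hrest ih =>
      rename_i a c
      obtain ⟨hPc, hG₂⟩ := hP a c hx h' hrest
      exact ReflTransGen.head hG₂ (ih hPc)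

lemma scc_eq_of_transfer {G₁ G₂ : V → V → Prop} {v : V}
    (h21 : ∀ x y, G₂ x y → G₁ x y)
    (htrans : ∀ t ∈ scc G₁ v, ∀ x ∈ scc G₁ v, ReflTransGen G₁ x t → ReflTransGen G₂ x t) :
    scc G₁ v = scc G₂ v := by
  ext u
  constructor
  · rintro ⟨huv, hvu⟩
    have hu : u ∈ scc G₁ v := ⟨huv, hvu⟩
    exact ⟨htrans v (mem_scc_self G₁ v) u hu huv, htrans u hu v (mem_scc_self G₁ v) hvu⟩
  · rintro ⟨huv, hvu⟩
    exact ⟨ReflTransGen.mono h21 _ _ huv, ReflTransGen.mono h21 _ _ hvu⟩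

lemma scc_subset_of_mem {G : V → V → Prop} {U : Set V} {v : V}
    (hG : ∀ a b, G a b → a ∈ U ∧ b ∈ U) (hv : v ∈ U) : scc G v ⊆ U := by
  intro u hu
  rcases hu.1.cases_head with rfl | ⟨c, huc, -⟩
  · exact hv
  · exact (hG _ _ huc).1

lemma growth {ε : ℝ} (hε0 : 0 ≤ ε) (c : ℕ → ℕ) (h0 : 1 ≤ c 0) :
    ∀ k : ℕ, (∀ j < k, (1+ε) * c j < c (j+1)) → (1+ε)^k ≤ (c k : ℝ) := by
  intro k
  induction k with
  | zero => intro _; simpa using by exact_mod_cast h0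
  | succ k ih =>
      intro h
      have hk := ih (fun j hj => h j (Nat.lt_succ_of_lt hj))
      have := h k (Nat.lt_succ_self k)
      calc (1+ε)^(k+1) = (1+ε) * (1+ε)^k := by ring
        _ ≤ (1+ε) * c k := by
            apply mul_le_mul_of_nonneg_left hk (by linarith)
        _ ≤ (c (k+1) : ℝ) := le_of_lt this

lemma sum_sccs_eq [Fintype V] (E : V → V → Prop) (f : Set V → ℝ) :
    ∑ C ∈ sccs E, (C.ncard : ℝ) * f C = ∑ v : V, f (scc E v) := by
  classical
  rw [sccs]
  rw [Finset.sum_image' (fun v => f (scc E v))]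
  intro c _
  have hfil : Finset.univ.filter (fun c' => scc E c' = scc E c) = (scc E c).toFinset := by
    ext x
    simp only [Finset.mem_filter, Finset.mem_univ, true_and, Set.mem_toFinset]
    constructor
    · intro h; rw [← h]; exact mem_scc_self E x
    · intro h; exact scc_eq_of_mem h
  erw [hfil]
  rw [Finset.sum_congr rfl (fun x hx => by rw [scc_eq_of_mem (Set.mem_toFinset.mp hx)])]
  rw [Finset.sum_const, nsmul_eq_mul]
  congr 1
  rw [Set.ncard_eq_toFinset_card']

lemma logb_double {x y : ℕ} (hx : 1 ≤ x) (h : 2 * x ≤ y) :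
    Real.logb 2 x + 1 ≤ Real.logb 2 y := by
  have hx0 : (0:ℝ) < x := by exact_mod_cast hx
  have h2x : Real.logb 2 ((2 * x : ℕ) : ℝ) ≤ Real.logb 2 y :=
    Real.logb_le_logb_of_le (by norm_num) (by positivity) (by exact_mod_cast h)
  rw [Nat.cast_mul, Nat.cast_two, Real.logb_mul (by norm_num) (ne_of_gt hx0),
    Real.logb_self_eq_one (by norm_num)] at h2x
  linarith

lemma logb_mono_nat {x y : ℕ} (hx : 1 ≤ x) (h : x ≤ y) : Real.logb 2 x ≤ Real.logb 2 y :=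
  Real.logb_le_logb_of_le (by norm_num) (by exact_mod_cast hx) (by exact_mod_cast h)

lemma logb_nat_nonneg {x : ℕ} (h : 1 ≤ x) : 0 ≤ Real.logb 2 x :=
  Real.logb_nonneg (by norm_num) (by exact_mod_cast h)

lemma pow_ge_of_eps {ε : ℝ} {k n : ℕ} (hε0 : 0 ≤ ε) (hε1 : ε ≤ 1) (hn : 1 ≤ n)
    (hεk : Real.logb 2 n ≤ k * ε / 2) : (n : ℝ) ≤ (1+ε)^k := by
  have hn0 : (0:ℝ) < n := by exact_mod_cast hn
  have hlog : Real.log (1+ε) ≥ ε / 2 := by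
    have h1 : Real.log (1/(1+ε)) ≤ 1/(1+ε) - 1 :=
      Real.log_le_sub_one_of_pos (by positivity)
    rw [Real.log_div one_ne_zero (by positivity), Real.log_one] at h1
    have h2 : 1 - 1/(1+ε) = ε/(1+ε) := by field_simp; ring
    have h3 : ε/2 ≤ ε/(1+ε) :=
      div_le_div_of_nonneg_left hε0 (by linarith) (by linarith)
    linarith [h1, h2 ▸ (by linarith [h1] : Real.log (1+ε) ≥ 1 - 1/(1+ε))]
  have hloglog : Real.log n ≤ Real.logb 2 n := by
    rw [Real.logb, le_div_iff₀ (Real.log_pos (by norm_num))]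
    exact mul_le_of_le_one_right (Real.log_nonneg (by exact_mod_cast hn))
      ((Real.log_le_sub_one_of_pos (by norm_num)).trans (by norm_num))
  have hkey : Real.log n ≤ Real.log ((1+ε)^k) := by
    rw [Real.log_pow]
    calc Real.log n ≤ (k : ℝ) * ε / 2 := hloglog.trans hεk
      _ ≤ (k : ℝ) * Real.log (1+ε) := by
          rw [mul_div_assoc]
          exact mul_le_mul_of_nonneg_left hlog (Nat.cast_nonneg k)
  calc (n:ℝ) = Real.exp (Real.log n) := (Real.exp_log hn0).symm
    _ ≤ Real.exp (Real.log ((1+ε)^k)) := Real.exp_le_exp.mpr hkey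
    _ = (1+ε)^k := Real.exp_log (by positivity)

noncomputable def wball (G : V → V → Prop) (w : V → V → ℕ) (U : Finset V) (v : V) (r : ℕ) :
    Finset V :=
  letI := Classical.dec
  U.filter fun u => wdist G w v u ≤ (r : ℕ∞)

noncomputable def wiball (G : V → V → Prop) (w : V → V → ℕ) (U : Finset V) (v : V) (r : ℕ) :
    Finset V :=
  letI := Classical.dec
  U.filter fun u => wdist G w u v ≤ (r : ℕ∞)

lemma mem_wball {G : V → V → Prop} {w : V → V → ℕ} {U : Finset V} {v u : V} {r : ℕ} :
    u ∈ wball G w U v r ↔ u ∈ U ∧ wdist G w v u ≤ (r : ℕ∞) := by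
  simp [wball, Finset.mem_filter]

lemma mem_wiball {G : V → V → Prop} {w : V → V → ℕ} {U : Finset V} {v u : V} {r : ℕ} :
    u ∈ wiball G w U v r ↔ u ∈ U ∧ wdist G w u v ≤ (r : ℕ∞) := by
  simp [wiball, Finset.mem_filter]

lemma wball_mono {G : V → V → Prop} {w : V → V → ℕ} {U : Finset V} {v : V} {r r' : ℕ}
    (h : r ≤ r') : wball G w U v r ⊆ wball G w U v r' := by
  intro u hu
  rw [mem_wball] at *
  exact ⟨hu.1, hu.2.trans (by exact_mod_cast h)⟩

lemma wiball_mono {G : V → V → Prop} {w : V → V → ℕ} {U : Finset V} {v : V} {r r' : ℕ}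
    (h : r ≤ r') : wiball G w U v r ⊆ wiball G w U v r' := by
  intro u hu
  rw [mem_wiball] at *
  exact ⟨hu.1, hu.2.trans (by exact_mod_cast h)⟩

lemma wball_subset {G : V → V → Prop} {w : V → V → ℕ} {U : Finset V} {v : V} {r : ℕ} :
    wball G w U v r ⊆ U := fun u hu => (mem_wball.mp hu).1

lemma wiball_subset {G : V → V → Prop} {w : V → V → ℕ} {U : Finset V} {v : V} {r : ℕ} :
    wiball G w U v r ⊆ U := fun u hu => (mem_wiball.mp hu).1

lemma diam_singleton_case {G : V → V → Prop} {w : V → V → ℕ} {d : ℕ} {v : V}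
    (h : scc G v = {v}) :
    ∀ u₁ ∈ scc G v, ∀ u₂ ∈ scc G v,
      wdist (induced G (scc G v)) w u₁ u₂ ≤ (d : ℕ∞) := by
  intro u₁ h₁ u₂ h₂
  rw [h, Set.mem_singleton_iff] at h₁ h₂
  subst h₁; subst h₂
  exact (wdist_self_le_zero _ _ _).trans zero_le

end Helpers

section CutStep
variable [Fintype V] [DecidableEq V]

lemma cut_step (E : V → V → Prop) (w : V → V → ℕ) (d : ℕ) (ε : ℝ) (hε0 : 0 ≤ ε)
    (U Bj Bj1 S₁ S₂ : Finset V)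
    (hBsub : Bj ⊆ Bj1) (hB1U : Bj1 ⊆ U)
    (hBne : Bj.Nonempty) (hcard2 : 2 * Bj.card ≤ U.card)
    (hAcard : ((Bj1.card : ℝ)) ≤ (1+ε) * Bj.card)
    (hS₁ : S₁ ⊆ Bj) (hS₂ : S₂ ⊆ U \ Bj1)
    (hscc1 : ∀ x ∈ Bj, scc (edgesAvoiding (induced E ↑U) ↑((Bj1 \ Bj) ∪ S₁ ∪ S₂)) x
        = scc (edgesAvoiding (induced E ↑Bj) ↑S₁) x)
    (hscc2 : ∀ x ∈ U \ Bj1, scc (edgesAvoiding (induced E ↑U) ↑((Bj1 \ Bj) ∪ S₁ ∪ S₂)) x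
        = scc (edgesAvoiding (induced E ↑(U \ Bj1)) ↑S₂) x)
    (hdiam1 : ∀ v : V, ∀ u₁ ∈ scc (edgesAvoiding (induced E ↑Bj) ↑S₁) v,
        ∀ u₂ ∈ scc (edgesAvoiding (induced E ↑Bj) ↑S₁) v,
        wdist (induced (edgesAvoiding (induced E ↑Bj) ↑S₁)
          (scc (edgesAvoiding (induced E ↑Bj) ↑S₁) v)) w u₁ u₂ ≤ (d : ℕ∞))
    (hdiam2 : ∀ v : V, ∀ u₁ ∈ scc (edgesAvoiding (induced E ↑(U \ Bj1)) ↑S₂) v,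
        ∀ u₂ ∈ scc (edgesAvoiding (induced E ↑(U \ Bj1)) ↑S₂) v,
        wdist (induced (edgesAvoiding (induced E ↑(U \ Bj1)) ↑S₂)
          (scc (edgesAvoiding (induced E ↑(U \ Bj1)) ↑S₂) v)) w u₁ u₂ ≤ (d : ℕ∞))
    (hsum1 : (S₁.card : ℝ) ≤ ε * ∑ v ∈ Bj, (Real.logb 2 Bj.card
        - Real.logb 2 (scc (edgesAvoiding (induced E ↑Bj) ↑S₁) v).ncard))
    (hsum2 : (S₂.card : ℝ) ≤ ε * ∑ v ∈ U \ Bj1, (Real.logb 2 (U \ Bj1).card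
        - Real.logb 2 (scc (edgesAvoiding (induced E ↑(U \ Bj1)) ↑S₂) v).ncard)) :
    ((Bj1 \ Bj) ∪ S₁ ∪ S₂) ⊆ U ∧
    (∀ v : V, ∀ u₁ ∈ scc (edgesAvoiding (induced E ↑U) ↑((Bj1 \ Bj) ∪ S₁ ∪ S₂)) v,
        ∀ u₂ ∈ scc (edgesAvoiding (induced E ↑U) ↑((Bj1 \ Bj) ∪ S₁ ∪ S₂)) v,
        wdist (induced (edgesAvoiding (induced E ↑U) ↑((Bj1 \ Bj) ∪ S₁ ∪ S₂))
          (scc (edgesAvoiding (induced E ↑U) ↑((Bj1 \ Bj) ∪ S₁ ∪ S₂)) v)) w u₁ u₂ ≤ (d : ℕ∞)) ∧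
    ((((Bj1 \ Bj) ∪ S₁ ∪ S₂).card : ℝ) ≤ ε * ∑ v ∈ U, (Real.logb 2 U.card
        - Real.logb 2 (scc (edgesAvoiding (induced E ↑U) ↑((Bj1 \ Bj) ∪ S₁ ∪ S₂)) v).ncard)) := by
  set A : Finset V := Bj1 \ Bj with hA
  set S : Finset V := A ∪ S₁ ∪ S₂ with hSdef
  set G : V → V → Prop := edgesAvoiding (induced E ↑U) ↑S with hG
  set G₁ : V → V → Prop := edgesAvoiding (induced E ↑Bj) ↑S₁ with hG₁
  set G₂ : V → V → Prop := edgesAvoiding (induced E ↑(U \ Bj1)) ↑S₂ with hG₂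
  have hBjU : Bj ⊆ U := hBsub.trans hB1U
  have hUne : U.Nonempty := ⟨hBne.choose, hBjU hBne.choose_spec⟩
  have hU1 : 1 ≤ U.card := Finset.card_pos.mpr hUne
  have hBj1 : 1 ≤ Bj.card := Finset.card_pos.mpr hBne
  -- membership facts
  have hmemS : ∀ x, x ∈ S ↔ (x ∈ A ∨ x ∈ S₁ ∨ x ∈ S₂) := by
    intro x; simp [hSdef, Finset.mem_union, or_assoc]
  have hBjS : ∀ x ∈ Bj, (x ∈ S ↔ x ∈ S₁) := by
    intro x hx
    rw [hmemS]
    constructor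
    · rintro (hxA | hx1 | hx2)
      · exact absurd hx (Finset.mem_sdiff.mp hxA).2
      · exact hx1
      · exact absurd (hBsub hx) (fun h => (Finset.mem_sdiff.mp (hS₂ hx2)).2 h)
    · intro h; exact Or.inr (Or.inl h)
  have hU'S : ∀ x ∈ U \ Bj1, (x ∈ S ↔ x ∈ S₂) := by
    intro x hx
    have hx1 : x ∉ Bj1 := (Finset.mem_sdiff.mp hx).2
    rw [hmemS]
    constructor
    · rintro (hxA | hx1' | hx2)
      · exact absurd (Finset.mem_sdiff.mp hxA).1 (fun _ => hx1 (Finset.mem_sdiff.mp hxA).1)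
      · exact absurd (hBsub (hS₁ hx1')) hx1
      · exact hx2
    · intro h; exact Or.inr (Or.inr h)
  have hSU : S ⊆ U := by
    intro x hx
    rcases (hmemS x).mp hx with h | h | h
    · exact hB1U (Finset.mem_sdiff.mp h).1
    · exact hBjU (hS₁ h)
    · exact (Finset.mem_sdiff.mp (hS₂ h)).1
  -- graph equivalences
  have hG1iff : ∀ a b, a ∈ Bj → b ∈ Bj → (G a b ↔ G₁ a b) := by
    intro a b ha hb
    simp only [hG, hG₁, edgesAvoiding, induced, Finset.mem_coe]
    constructor
    · rintro ⟨⟨hE, -, -⟩, haS, hbS⟩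
      exact ⟨⟨hE, ha, hb⟩, fun h => haS ((hBjS a ha).mpr h), fun h => hbS ((hBjS b hb).mpr h)⟩
    · rintro ⟨⟨hE, -, -⟩, ha1, hb1⟩
      exact ⟨⟨hE, hBjU ha, hBjU hb⟩, fun h => ha1 ((hBjS a ha).mp h),
        fun h => hb1 ((hBjS b hb).mp h)⟩
  have hG2iff : ∀ a b, a ∈ U \ Bj1 → b ∈ U \ Bj1 → (G a b ↔ G₂ a b) := by
    intro a b ha hb
    simp only [hG, hG₂, edgesAvoiding, induced, Finset.mem_coe]
    constructor
    · rintro ⟨⟨hE, -, -⟩, haS, hbS⟩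
      exact ⟨⟨hE, ha, hb⟩, fun h => haS ((hU'S a ha).mpr h), fun h => hbS ((hU'S b hb).mpr h)⟩
    · rintro ⟨⟨hE, -, -⟩, ha1, hb1⟩
      exact ⟨⟨hE, (Finset.mem_sdiff.mp ha).1, (Finset.mem_sdiff.mp hb).1⟩,
        fun h => ha1 ((hU'S a ha).mp h), fun h => hb1 ((hU'S b hb).mp h)⟩
  have hscc1sub : ∀ x ∈ Bj, scc G₁ x ⊆ ↑Bj := by
    intro x hx
    exact scc_subset_of_mem (fun a b hab => ⟨hab.1.2.1, hab.1.2.2⟩) hx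
  have hscc2sub : ∀ x ∈ U \ Bj1, scc G₂ x ⊆ ↑(U \ Bj1) := by
    intro x hx
    exact scc_subset_of_mem (fun a b hab => ⟨hab.1.2.1, hab.1.2.2⟩) hx
  have hind1 : ∀ x ∈ Bj, induced G (scc G₁ x) = induced G₁ (scc G₁ x) := by
    intro x hx
    funext a b
    apply propext
    simp only [induced]
    constructor
    · rintro ⟨hab, ha, hb⟩
      exact ⟨(hG1iff a b (hscc1sub x hx ha) (hscc1sub x hx hb)).mp hab, ha, hb⟩
    · rintro ⟨hab, ha, hb⟩
      exact ⟨(hG1iff a b (hscc1sub x hx ha) (hscc1sub x hx hb)).mpr hab, ha, hb⟩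
  have hind2 : ∀ x ∈ U \ Bj1, induced G (scc G₂ x) = induced G₂ (scc G₂ x) := by
    intro x hx
    funext a b
    apply propext
    simp only [induced]
    constructor
    · rintro ⟨hab, ha, hb⟩
      exact ⟨(hG2iff a b (hscc2sub x hx ha) (hscc2sub x hx hb)).mp hab, ha, hb⟩
    · rintro ⟨hab, ha, hb⟩
      exact ⟨(hG2iff a b (hscc2sub x hx ha) (hscc2sub x hx hb)).mpr hab, ha, hb⟩
  have hsingleS : ∀ x ∈ S, scc G x = {x} := by
    intro x hx
    apply scc_eq_singleton
    rintro y ⟨-, -, hxS⟩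
    exact hxS (Finset.mem_coe.mpr hx)
  have hsingleU : ∀ x, x ∉ U → scc G x = {x} := by
    intro x hx
    apply scc_eq_singleton
    rintro y ⟨⟨-, -, hxU⟩, -, -⟩
    exact hx (Finset.mem_coe.mp hxU)
  refine ⟨hSU, ?_, ?_⟩
  · -- diameter property
    intro v
    by_cases hvBj : v ∈ Bj
    · rw [hscc1 v hvBj, hind1 v hvBj]
      exact hdiam1 v
    by_cases hvU : v ∈ U
    · by_cases hvBj1 : v ∈ Bj1
      · have hvA : v ∈ S := (hmemS v).mpr (Or.inl (Finset.mem_sdiff.mpr ⟨hvBj1, hvBj⟩))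
        exact diam_singleton_case (hsingleS v hvA)
      · have hvU' : v ∈ U \ Bj1 := Finset.mem_sdiff.mpr ⟨hvU, hvBj1⟩
        rw [hscc2 v hvU', hind2 v hvU']
        exact hdiam2 v
    · exact diam_singleton_case (hsingleU v hvU)
  · -- cardinality bound
    have hUeq : U = (Bj ∪ A) ∪ (U \ Bj1) := by
      rw [hA, Finset.union_sdiff_of_subset hBsub, Finset.union_sdiff_of_subset hB1U]
    have hdisj1 : Disjoint Bj A := Finset.disjoint_sdiff
    have hdisj2 : Disjoint (Bj ∪ A) (U \ Bj1) := by
      rw [hA, Finset.union_sdiff_of_subset hBsub]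
      exact Finset.disjoint_sdiff
    have hsum_split : ∑ v ∈ U, (Real.logb 2 U.card - Real.logb 2 (scc G v).ncard)
        = (∑ v ∈ Bj, (Real.logb 2 U.card - Real.logb 2 (scc G v).ncard))
        + (∑ v ∈ A, (Real.logb 2 U.card - Real.logb 2 (scc G v).ncard))
        + (∑ v ∈ U \ Bj1, (Real.logb 2 U.card - Real.logb 2 (scc G v).ncard)) := by
      rw [← Finset.sum_union hdisj1, ← Finset.sum_union hdisj2, ← hUeq]
    set T1 : ℝ := ∑ v ∈ Bj, (Real.logb 2 Bj.card - Real.logb 2 (scc G₁ v).ncard) with hT1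
    set T2 : ℝ := ∑ v ∈ U \ Bj1, (Real.logb 2 (U \ Bj1).card
        - Real.logb 2 (scc G₂ v).ncard) with hT2
    have hSB : (Bj.card : ℝ) + T1 ≤ ∑ v ∈ Bj, (Real.logb 2 U.card
        - Real.logb 2 (scc G v).ncard) := by
      have : ∀ v ∈ Bj, (1 + (Real.logb 2 Bj.card - Real.logb 2 (scc G₁ v).ncard))
          ≤ Real.logb 2 U.card - Real.logb 2 (scc G v).ncard := by
        intro v hv
        rw [hscc1 v hv]
        have := logb_double hBj1 hcard2
        linarith
      calc (Bj.card : ℝ) + T1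
          = ∑ v ∈ Bj, (1 + (Real.logb 2 Bj.card - Real.logb 2 (scc G₁ v).ncard)) := by
            rw [Finset.sum_add_distrib, Finset.sum_const, nsmul_eq_mul, mul_one, hT1]
        _ ≤ _ := Finset.sum_le_sum this
    have hSA : (0:ℝ) ≤ ∑ v ∈ A, (Real.logb 2 U.card - Real.logb 2 (scc G v).ncard) := by
      apply Finset.sum_nonneg
      intro x hx
      have hxS : x ∈ S := (hmemS x).mpr (Or.inl hx)
      rw [hsingleS x hxS, Set.ncard_singleton]
      simp only [Nat.cast_one, Real.logb_one, sub_zero]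
      exact logb_nat_nonneg hU1
    have hSU' : T2 ≤ ∑ v ∈ U \ Bj1, (Real.logb 2 U.card - Real.logb 2 (scc G v).ncard) := by
      rw [hT2]
      apply Finset.sum_le_sum
      intro v hv
      rw [hscc2 v hv]
      have h1 : 1 ≤ (U \ Bj1).card := Finset.card_pos.mpr ⟨v, hv⟩
      have := logb_mono_nat h1 (Finset.card_le_card (Finset.sdiff_subset))
      linarith
    have hcards : (S.card : ℝ) ≤ (A.card : ℝ) + S₁.card + S₂.card := by
      have h1 : S.card ≤ (A ∪ S₁).card + S₂.card := Finset.card_union_le _ _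
      have h2 : (A ∪ S₁).card ≤ A.card + S₁.card := Finset.card_union_le _ _
      push_cast
      exact_mod_cast (h1.trans (Nat.add_le_add_right h2 _))
    have hAcard' : (A.card : ℝ) ≤ ε * Bj.card := by
      have : A.card = Bj1.card - Bj.card := Finset.card_sdiff_of_subset hBsub
      have hle : Bj.card ≤ Bj1.card := Finset.card_le_card hBsub
      have : (A.card : ℝ) = (Bj1.card : ℝ) - Bj.card := by
        rw [this, Nat.cast_sub hle]
      rw [this]
      linarith
    have e1 : ε * ((Bj.card : ℝ) + T1) ≤ ε * ∑ v ∈ Bj, (Real.logb 2 U.card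
        - Real.logb 2 (scc G v).ncard) := mul_le_mul_of_nonneg_left hSB hε0
    have e2 : (0:ℝ) ≤ ε * ∑ v ∈ A, (Real.logb 2 U.card - Real.logb 2 (scc G v).ncard) :=
      mul_nonneg hε0 hSA
    have e3 : ε * T2 ≤ ε * ∑ v ∈ U \ Bj1, (Real.logb 2 U.card
        - Real.logb 2 (scc G v).ncard) := mul_le_mul_of_nonneg_left hSU' hε0
    rw [hsum_split]
    have hs1 : (S₁.card : ℝ) ≤ ε * T1 := hsum1
    have hs2 : (S₂.card : ℝ) ≤ ε * T2 := hsum2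
    nlinarith [hcards, hAcard', e1, e2, e3, hs1, hs2]

end CutStep

section Main
variable [Fintype V]

lemma claim_main (E : V → V → Prop) (w : V → V → ℕ) (ω k d : ℕ)
    (hwle : ∀ a b, E a b → w a b ≤ ω)
    (hd : d = 2 * ω * k)
    (ε : ℝ) (hε0 : 0 ≤ ε)
    (hpow : ((Fintype.card V : ℕ) : ℝ) ≤ (1 + ε) ^ k) :
    ∀ (m : ℕ) (U : Finset V), U.card ≤ m →
      ∃ S : Finset V, S ⊆ U ∧
        (∀ v : V, ∀ u₁ ∈ scc (edgesAvoiding (induced E ↑U) ↑S) v,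
            ∀ u₂ ∈ scc (edgesAvoiding (induced E ↑U) ↑S) v,
          wdist (induced (edgesAvoiding (induced E ↑U) ↑S)
            (scc (edgesAvoiding (induced E ↑U) ↑S) v)) w u₁ u₂ ≤ (d : ℕ∞)) ∧
        ((S.card : ℝ) ≤ ε * ∑ v ∈ U, (Real.logb 2 U.card
            - Real.logb 2 (scc (edgesAvoiding (induced E ↑U) ↑S) v).ncard)) := by
  classical
  intro m
  induction m with
  | zero =>
      intro U hU
      have hUempty : U = ∅ := Finset.card_eq_zero.mp (Nat.le_zero.mp hU)
      subst hUempty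
      refine ⟨∅, Finset.Subset.refl _, ?_, by simp⟩
      intro v
      apply diam_singleton_case
      apply scc_eq_singleton
      rintro y ⟨⟨-, -, hyU⟩, -, -⟩
      simpa using hyU
  | succ m ih =>
      intro U hU
      set H : V → V → Prop := induced E ↑U with hH
      have hHU : ∀ a b, H a b → a ∈ U ∧ b ∈ U := by
        rintro a b ⟨-, ha, hb⟩
        exact ⟨Finset.mem_coe.mp ha, Finset.mem_coe.mp hb⟩
      by_cases hcaseA : ∃ v ∈ U, 2 * (wball H w U v (k*ω)).card ≤ U.card
          ∨ 2 * (wiball H w U v (k*ω)).card ≤ U.card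
      · -- cut case
        obtain ⟨v, hvU, hAcase⟩ := hcaseA
        have hcardV : U.card ≤ Fintype.card V := by
          simpa using Finset.card_le_univ U
        rcases hAcase with hsmall | hsmall
        · -- out-ball case
          set B : ℕ → Finset V := fun j => wball H w U v (j*ω) with hBdef
          have hB0 : v ∈ B 0 :=
            mem_wball.mpr ⟨hvU, (wdist_self_le_zero _ _ _).trans zero_le⟩
          have hBmono : ∀ i j, i ≤ j → B i ⊆ B j := fun i j hij =>
            wball_mono (Nat.mul_le_mul_right ω hij)
          have hBU : ∀ j, B j ⊆ U := fun j => wball_subset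
          have hedge : ∀ j x y, x ∈ B j → H x y → y ∈ B (j+1) := by
            intro j x y hx hxy
            have hyU : y ∈ U := (hHU x y hxy).2
            have h1 : wdist H w v x ≤ ((j*ω : ℕ) : ℕ∞) := (mem_wball.mp hx).2
            have h2 : wdist H w x y ≤ (w x y : ℕ∞) := wdist_le_of_rel hxy
            have h3 : (w x y : ℕ∞) ≤ (ω : ℕ∞) := by exact_mod_cast hwle x y hxy.1
            refine mem_wball.mpr ⟨hyU, ?_⟩
            calc wdist H w v y ≤ wdist H w v x + wdist H w x y := wdist_triangle H w v x y
              _ ≤ ((j*ω : ℕ) : ℕ∞) + ((ω : ℕ) : ℕ∞) := add_le_add h1 (h2.trans h3)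
              _ = (((j+1)*ω : ℕ) : ℕ∞) := by push_cast; ring
          have hjex : ∃ j, j < k ∧ ((B (j+1)).card : ℝ) ≤ (1+ε) * (B j).card := by
            by_contra hcon
            push_neg at hcon
            have hgrow := growth hε0 (fun j => (B j).card)
              (Finset.card_pos.mpr ⟨v, hB0⟩) k (fun j hj => hcon j hj)
            have hnk : ((Fintype.card V : ℕ) : ℝ) ≤ ((B k).card : ℝ) := hpow.trans hgrow
            have hnk' : Fintype.card V ≤ (B k).card := by exact_mod_cast hnk
            have h1 : 1 ≤ (B k).card := Finset.card_pos.mpr ⟨v, hBmono 0 k (Nat.zero_le k) hB0⟩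
            have hsm : 2 * (B k).card ≤ U.card := hsmall
            omega
          obtain ⟨j, hjk, hjcard⟩ := hjex
          have hBsub : B j ⊆ B (j+1) := hBmono j (j+1) (Nat.le_succ j)
          have hB1U : B (j+1) ⊆ U := hBU _
          have hvBj : v ∈ B j := hBmono 0 j (Nat.zero_le j) hB0
          have hBne : (B j).Nonempty := ⟨v, hvBj⟩
          have hcard2 : 2 * (B j).card ≤ U.card := by
            have := Finset.card_le_card (hBmono j k (le_of_lt hjk))
            have hsm : 2 * (B k).card ≤ U.card := hsmall
            omega
          have hBjm : (B j).card ≤ m := by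
            have h1 : 1 ≤ (B j).card := Finset.card_pos.mpr hBne
            omega
          have hU'm : (U \ B (j+1)).card ≤ m := by
            have h1 : 1 ≤ (B (j+1)).card := Finset.card_pos.mpr ⟨v, hBsub hvBj⟩
            have h2 : (U \ B (j+1)).card = U.card - (B (j+1)).card :=
              Finset.card_sdiff_of_subset hB1U
            omega
          obtain ⟨S₁, hS₁sub, hdiam1, hsum1⟩ := ih (B j) hBjm
          obtain ⟨S₂, hS₂sub, hdiam2, hsum2⟩ := ih (U \ B (j+1)) hU'm
          set S : Finset V := (B (j+1) \ B j) ∪ S₁ ∪ S₂ with hSdef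
          set G : V → V → Prop := edgesAvoiding H ↑S with hGdef
          set G₁ : V → V → Prop := edgesAvoiding (induced E ↑(B j)) ↑S₁ with hG₁def
          set G₂ : V → V → Prop := edgesAvoiding (induced E ↑(U \ B (j+1))) ↑S₂ with hG₂def
          have hmemS : ∀ x : V, x ∈ S ↔ (x ∈ B (j+1) \ B j ∨ x ∈ S₁ ∨ x ∈ S₂) := by
            intro x; simp [hSdef, Finset.mem_union, or_assoc]
          have hS₁S : ∀ x ∈ S₁, x ∈ S := fun x hx => (hmemS x).mpr (Or.inr (Or.inl hx))
          have hS₂S : ∀ x ∈ S₂, x ∈ S := fun x hx => (hmemS x).mpr (Or.inr (Or.inr hx))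
          have hAS : ∀ x ∈ B (j+1) \ B j, x ∈ S := fun x hx => (hmemS x).mpr (Or.inl hx)
          have hclosed : ∀ a b : V, G a b → a ∈ (↑(B j) : Set V) → b ∈ (↑(B j) : Set V) := by
            rintro a b ⟨hab, -, hbS⟩ ha
            have hb1 : b ∈ B (j+1) := hedge j a b (Finset.mem_coe.mp ha) hab
            by_contra hbB
            exact hbS (Finset.mem_coe.mpr (hAS b (Finset.mem_sdiff.mpr
              ⟨hb1, fun h => hbB (Finset.mem_coe.mpr h)⟩)))
          have hscc1 : ∀ x ∈ B j, scc G x = scc G₁ x := by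
            intro x hx
            have hsub : scc G x ⊆ (↑(B j) : Set V) := fun u hu =>
              reach_closed hclosed hu.2 (Finset.mem_coe.mpr hx)
            apply scc_eq_of_transfer
            · rintro a b ⟨⟨hE, ha, hb⟩, haS₁, hbS₁⟩
              have haBj : a ∈ B j := Finset.mem_coe.mp ha
              have hbBj : b ∈ B j := Finset.mem_coe.mp hb
              refine ⟨⟨hE, Finset.mem_coe.mpr (hBU j haBj), Finset.mem_coe.mpr (hBU j hbBj)⟩,
                ?_, ?_⟩
              · intro haS
                rcases (hmemS a).mp (Finset.mem_coe.mp haS) with h | h | h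
                · exact (Finset.mem_sdiff.mp h).2 haBj
                · exact haS₁ (Finset.mem_coe.mpr h)
                · exact (Finset.mem_sdiff.mp (hS₂sub h)).2 (hBsub haBj)
              · intro hbS
                rcases (hmemS b).mp (Finset.mem_coe.mp hbS) with h | h | h
                · exact (Finset.mem_sdiff.mp h).2 hbBj
                · exact hbS₁ (Finset.mem_coe.mpr h)
                · exact (Finset.mem_sdiff.mp (hS₂sub h)).2 (hBsub hbBj)
            · intro t ht x' hx' hr
              refine reach_transfer (P := fun y => y ∈ (↑(B j) : Set V)) ?_ x' (hsub hx') hr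
              rintro a b ha ⟨hab, haS, hbS⟩ hr'
              have hbBj : b ∈ (↑(B j) : Set V) := hclosed a b ⟨hab, haS, hbS⟩ ha
              refine ⟨hbBj, ⟨hab.1, ha, hbBj⟩, ?_, ?_⟩
              · exact fun h => haS (Finset.mem_coe.mpr (hS₁S a (Finset.mem_coe.mp h)))
              · exact fun h => hbS (Finset.mem_coe.mpr (hS₁S b (Finset.mem_coe.mp h)))
          have hscc2 : ∀ x ∈ U \ B (j+1), scc G x = scc G₂ x := by
            intro x hx
            have hxB : x ∉ B j := fun h => (Finset.mem_sdiff.mp hx).2 (hBsub h)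
            have hsub : scc G x ⊆ (↑(U \ B (j+1)) : Set V) := by
              intro u hu
              rcases hu.1.cases_head with rfl | ⟨c, huc, -⟩
              · exact Finset.mem_coe.mpr hx
              obtain ⟨hHuc, huS, -⟩ := huc
              have huU : u ∈ U := (hHU _ _ hHuc).1
              have huBj : u ∉ B j := by
                intro h
                exact hxB (Finset.mem_coe.mp
                  (reach_closed hclosed hu.1 (Finset.mem_coe.mpr h)))
              have huA : u ∉ B (j+1) \ B j := fun h => huS (Finset.mem_coe.mpr (hAS u h))
              have huB1 : u ∉ B (j+1) := fun h => huA (Finset.mem_sdiff.mpr ⟨h, huBj⟩)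
              exact Finset.mem_coe.mpr (Finset.mem_sdiff.mpr ⟨huU, huB1⟩)
            apply scc_eq_of_transfer
            · rintro a b ⟨⟨hE, ha, hb⟩, haS₂, hbS₂⟩
              have haU' : a ∈ U \ B (j+1) := Finset.mem_coe.mp ha
              have hbU' : b ∈ U \ B (j+1) := Finset.mem_coe.mp hb
              refine ⟨⟨hE, Finset.mem_coe.mpr (Finset.mem_sdiff.mp haU').1,
                Finset.mem_coe.mpr (Finset.mem_sdiff.mp hbU').1⟩, ?_, ?_⟩
              · intro haS
                rcases (hmemS a).mp (Finset.mem_coe.mp haS) with h | h | h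
                · exact (Finset.mem_sdiff.mp haU').2 (Finset.mem_sdiff.mp h).1
                · exact (Finset.mem_sdiff.mp haU').2 (hBsub (hS₁sub h))
                · exact haS₂ (Finset.mem_coe.mpr h)
              · intro hbS
                rcases (hmemS b).mp (Finset.mem_coe.mp hbS) with h | h | h
                · exact (Finset.mem_sdiff.mp hbU').2 (Finset.mem_sdiff.mp h).1
                · exact (Finset.mem_sdiff.mp hbU').2 (hBsub (hS₁sub h))
                · exact hbS₂ (Finset.mem_coe.mpr h)
            · intro t ht x' hx' hr
              refine reach_transfer (P := fun y => y ∈ (↑(U \ B (j+1)) : Set V)) ?_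
                x' (hsub hx') hr
              rintro a b ha ⟨hab, haS, hbS⟩ hr'
              have hbU : b ∈ U := (hHU _ _ hab).2
              have hbBj : b ∉ B j := by
                intro h
                have := reach_closed hclosed hr' (Finset.mem_coe.mpr h)
                exact (Finset.mem_sdiff.mp (Finset.mem_coe.mp (hsub ht))).2
                  (hBsub (Finset.mem_coe.mp this))
              have hbA : b ∉ B (j+1) \ B j := fun h => hbS (Finset.mem_coe.mpr (hAS b h))
              have hbB1 : b ∉ B (j+1) := fun h => hbA (Finset.mem_sdiff.mpr ⟨h, hbBj⟩)
              have hbU' : b ∈ (↑(U \ B (j+1)) : Set V) :=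
                Finset.mem_coe.mpr (Finset.mem_sdiff.mpr ⟨hbU, hbB1⟩)
              refine ⟨hbU', ⟨hab.1, ha, hbU'⟩, ?_, ?_⟩
              · exact fun h => haS (Finset.mem_coe.mpr (hS₂S a (Finset.mem_coe.mp h)))
              · exact fun h => hbS (Finset.mem_coe.mpr (hS₂S b (Finset.mem_coe.mp h)))
          have hcs := cut_step E w d ε hε0 U (B j) (B (j+1)) S₁ S₂ hBsub hB1U hBne
            hcard2 hjcard hS₁sub hS₂sub hscc1 hscc2 hdiam1 hdiam2 hsum1 hsum2
          exact ⟨S, hcs.1, hcs.2.1, hcs.2.2⟩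
        · -- in-ball case
          set B : ℕ → Finset V := fun j => wiball H w U v (j*ω) with hBdef
          have hB0 : v ∈ B 0 :=
            mem_wiball.mpr ⟨hvU, (wdist_self_le_zero _ _ _).trans zero_le⟩
          have hBmono : ∀ i j, i ≤ j → B i ⊆ B j := fun i j hij =>
            wiball_mono (Nat.mul_le_mul_right ω hij)
          have hBU : ∀ j, B j ⊆ U := fun j => wiball_subset
          have hedge : ∀ j x y, y ∈ B j → H x y → x ∈ B (j+1) := by
            intro j x y hy hxy
            have hxU : x ∈ U := (hHU x y hxy).1
            have h1 : wdist H w y v ≤ ((j*ω : ℕ) : ℕ∞) := (mem_wiball.mp hy).2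
            have h2 : wdist H w x y ≤ (w x y : ℕ∞) := wdist_le_of_rel hxy
            have h3 : (w x y : ℕ∞) ≤ (ω : ℕ∞) := by exact_mod_cast hwle x y hxy.1
            refine mem_wiball.mpr ⟨hxU, ?_⟩
            calc wdist H w x v ≤ wdist H w x y + wdist H w y v := wdist_triangle H w x y v
              _ ≤ ((ω : ℕ) : ℕ∞) + ((j*ω : ℕ) : ℕ∞) := add_le_add (h2.trans h3) h1
              _ = (((j+1)*ω : ℕ) : ℕ∞) := by push_cast; ring
          have hjex : ∃ j, j < k ∧ ((B (j+1)).card : ℝ) ≤ (1+ε) * (B j).card := by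
            by_contra hcon
            push_neg at hcon
            have hgrow := growth hε0 (fun j => (B j).card)
              (Finset.card_pos.mpr ⟨v, hB0⟩) k (fun j hj => hcon j hj)
            have hnk : ((Fintype.card V : ℕ) : ℝ) ≤ ((B k).card : ℝ) := hpow.trans hgrow
            have hnk' : Fintype.card V ≤ (B k).card := by exact_mod_cast hnk
            have h1 : 1 ≤ (B k).card := Finset.card_pos.mpr ⟨v, hBmono 0 k (Nat.zero_le k) hB0⟩
            have hsm : 2 * (B k).card ≤ U.card := hsmall
            omega
          obtain ⟨j, hjk, hjcard⟩ := hjex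
          have hBsub : B j ⊆ B (j+1) := hBmono j (j+1) (Nat.le_succ j)
          have hB1U : B (j+1) ⊆ U := hBU _
          have hvBj : v ∈ B j := hBmono 0 j (Nat.zero_le j) hB0
          have hBne : (B j).Nonempty := ⟨v, hvBj⟩
          have hcard2 : 2 * (B j).card ≤ U.card := by
            have := Finset.card_le_card (hBmono j k (le_of_lt hjk))
            have hsm : 2 * (B k).card ≤ U.card := hsmall
            omega
          have hBjm : (B j).card ≤ m := by
            have h1 : 1 ≤ (B j).card := Finset.card_pos.mpr hBne
            omega
          have hU'm : (U \ B (j+1)).card ≤ m := by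
            have h1 : 1 ≤ (B (j+1)).card := Finset.card_pos.mpr ⟨v, hBsub hvBj⟩
            have h2 : (U \ B (j+1)).card = U.card - (B (j+1)).card :=
              Finset.card_sdiff_of_subset hB1U
            omega
          obtain ⟨S₁, hS₁sub, hdiam1, hsum1⟩ := ih (B j) hBjm
          obtain ⟨S₂, hS₂sub, hdiam2, hsum2⟩ := ih (U \ B (j+1)) hU'm
          set S : Finset V := (B (j+1) \ B j) ∪ S₁ ∪ S₂ with hSdef
          set G : V → V → Prop := edgesAvoiding H ↑S with hGdef
          set G₁ : V → V → Prop := edgesAvoiding (induced E ↑(B j)) ↑S₁ with hG₁def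
          set G₂ : V → V → Prop := edgesAvoiding (induced E ↑(U \ B (j+1))) ↑S₂ with hG₂def
          have hmemS : ∀ x : V, x ∈ S ↔ (x ∈ B (j+1) \ B j ∨ x ∈ S₁ ∨ x ∈ S₂) := by
            intro x; simp [hSdef, Finset.mem_union, or_assoc]
          have hS₁S : ∀ x ∈ S₁, x ∈ S := fun x hx => (hmemS x).mpr (Or.inr (Or.inl hx))
          have hS₂S : ∀ x ∈ S₂, x ∈ S := fun x hx => (hmemS x).mpr (Or.inr (Or.inr hx))
          have hAS : ∀ x ∈ B (j+1) \ B j, x ∈ S := fun x hx => (hmemS x).mpr (Or.inl hx)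
          have hclosed : ∀ a b : V, G a b → b ∈ (↑(B j) : Set V) → a ∈ (↑(B j) : Set V) := by
            rintro a b ⟨hab, haS, -⟩ hb
            have ha1 : a ∈ B (j+1) := hedge j a b (Finset.mem_coe.mp hb) hab
            by_contra haB
            exact haS (Finset.mem_coe.mpr (hAS a (Finset.mem_sdiff.mpr
              ⟨ha1, fun h => haB (Finset.mem_coe.mpr h)⟩)))
          have hscc1 : ∀ x ∈ B j, scc G x = scc G₁ x := by
            intro x hx
            have hsub : scc G x ⊆ (↑(B j) : Set V) := fun u hu =>
              reach_closed' hclosed hu.1 (Finset.mem_coe.mpr hx)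
            apply scc_eq_of_transfer
            · rintro a b ⟨⟨hE, ha, hb⟩, haS₁, hbS₁⟩
              have haBj : a ∈ B j := Finset.mem_coe.mp ha
              have hbBj : b ∈ B j := Finset.mem_coe.mp hb
              refine ⟨⟨hE, Finset.mem_coe.mpr (hBU j haBj), Finset.mem_coe.mpr (hBU j hbBj)⟩,
                ?_, ?_⟩
              · intro haS
                rcases (hmemS a).mp (Finset.mem_coe.mp haS) with h | h | h
                · exact (Finset.mem_sdiff.mp h).2 haBj
                · exact haS₁ (Finset.mem_coe.mpr h)
                · exact (Finset.mem_sdiff.mp (hS₂sub h)).2 (hBsub haBj)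
              · intro hbS
                rcases (hmemS b).mp (Finset.mem_coe.mp hbS) with h | h | h
                · exact (Finset.mem_sdiff.mp h).2 hbBj
                · exact hbS₁ (Finset.mem_coe.mpr h)
                · exact (Finset.mem_sdiff.mp (hS₂sub h)).2 (hBsub hbBj)
            · intro t ht x' hx' hr
              have htBj : t ∈ (↑(B j) : Set V) := hsub ht
              refine reach_transfer (P := fun y => y ∈ (↑(B j) : Set V)) ?_ x' (hsub hx') hr
              rintro a b ha ⟨hab, haS, hbS⟩ hr'
              have hbBj : b ∈ (↑(B j) : Set V) := reach_closed' hclosed hr' htBj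
              refine ⟨hbBj, ⟨hab.1, ha, hbBj⟩, ?_, ?_⟩
              · exact fun h => haS (Finset.mem_coe.mpr (hS₁S a (Finset.mem_coe.mp h)))
              · exact fun h => hbS (Finset.mem_coe.mpr (hS₁S b (Finset.mem_coe.mp h)))
          have hscc2 : ∀ x ∈ U \ B (j+1), scc G x = scc G₂ x := by
            intro x hx
            have hxB : x ∉ B j := fun h => (Finset.mem_sdiff.mp hx).2 (hBsub h)
            have hsub : scc G x ⊆ (↑(U \ B (j+1)) : Set V) := by
              intro u hu
              rcases hu.1.cases_head with rfl | ⟨c, huc, -⟩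
              · exact Finset.mem_coe.mpr hx
              obtain ⟨hHuc, huS, -⟩ := huc
              have huU : u ∈ U := (hHU _ _ hHuc).1
              have huBj : u ∉ B j := by
                intro h
                exact hxB (Finset.mem_coe.mp
                  (reach_closed' hclosed hu.2 (Finset.mem_coe.mpr h)))
              have huA : u ∉ B (j+1) \ B j := fun h => huS (Finset.mem_coe.mpr (hAS u h))
              have huB1 : u ∉ B (j+1) := fun h => huA (Finset.mem_sdiff.mpr ⟨h, huBj⟩)
              exact Finset.mem_coe.mpr (Finset.mem_sdiff.mpr ⟨huU, huB1⟩)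
            apply scc_eq_of_transfer
            · rintro a b ⟨⟨hE, ha, hb⟩, haS₂, hbS₂⟩
              have haU' : a ∈ U \ B (j+1) := Finset.mem_coe.mp ha
              have hbU' : b ∈ U \ B (j+1) := Finset.mem_coe.mp hb
              refine ⟨⟨hE, Finset.mem_coe.mpr (Finset.mem_sdiff.mp haU').1,
                Finset.mem_coe.mpr (Finset.mem_sdiff.mp hbU').1⟩, ?_, ?_⟩
              · intro haS
                rcases (hmemS a).mp (Finset.mem_coe.mp haS) with h | h | h
                · exact (Finset.mem_sdiff.mp haU').2 (Finset.mem_sdiff.mp h).1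
                · exact (Finset.mem_sdiff.mp haU').2 (hBsub (hS₁sub h))
                · exact haS₂ (Finset.mem_coe.mpr h)
              · intro hbS
                rcases (hmemS b).mp (Finset.mem_coe.mp hbS) with h | h | h
                · exact (Finset.mem_sdiff.mp hbU').2 (Finset.mem_sdiff.mp h).1
                · exact (Finset.mem_sdiff.mp hbU').2 (hBsub (hS₁sub h))
                · exact hbS₂ (Finset.mem_coe.mpr h)
            · intro t ht x' hx' hr
              refine reach_transfer (P := fun y => y ∈ (↑(U \ B (j+1)) : Set V)) ?_
                x' (hsub hx') hr
              rintro a b ha ⟨hab, haS, hbS⟩ hr'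
              have hbU : b ∈ U := (hHU _ _ hab).2
              have haU' : a ∈ U \ B (j+1) := Finset.mem_coe.mp ha
              have hbBj : b ∉ B j := by
                intro h
                exact (Finset.mem_sdiff.mp haU').2 (hedge j a b h hab)
              have hbA : b ∉ B (j+1) \ B j := fun h => hbS (Finset.mem_coe.mpr (hAS b h))
              have hbB1 : b ∉ B (j+1) := fun h => hbA (Finset.mem_sdiff.mpr ⟨h, hbBj⟩)
              have hbU' : b ∈ (↑(U \ B (j+1)) : Set V) :=
                Finset.mem_coe.mpr (Finset.mem_sdiff.mpr ⟨hbU, hbB1⟩)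
              refine ⟨hbU', ⟨hab.1, ha, hbU'⟩, ?_, ?_⟩
              · exact fun h => haS (Finset.mem_coe.mpr (hS₂S a (Finset.mem_coe.mp h)))
              · exact fun h => hbS (Finset.mem_coe.mpr (hS₂S b (Finset.mem_coe.mp h)))
          have hcs := cut_step E w d ε hε0 U (B j) (B (j+1)) S₁ S₂ hBsub hB1U hBne
            hcard2 hjcard hS₁sub hS₂sub hscc1 hscc2 hdiam1 hdiam2 hsum1 hsum2
          exact ⟨S, hcs.1, hcs.2.1, hcs.2.2⟩
      · -- no cut: low diameter already
        push_neg at hcaseA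
        refine ⟨∅, Finset.empty_subset _, ?_, ?_⟩
        · have hGH : edgesAvoiding (induced E ↑U) ↑(∅ : Finset V) = H := by
            funext a b
            apply propext
            simp [edgesAvoiding, hH]
          rw [hGH]
          intro v u₁ hu₁ u₂ hu₂
          by_cases h12 : u₁ = u₂
          · subst h12
            exact (wdist_self_le_zero _ _ _).trans zero_le
          have hr12 : Relation.ReflTransGen H u₁ u₂ := hu₁.1.trans hu₂.2
          have hu₁U : u₁ ∈ U := by
            rcases hr12.cases_head with h | ⟨c, hc, -⟩
            · exact absurd h h12
            · exact (hHU _ _ hc).1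
          have hu₂U : u₂ ∈ U := by
            rcases hr12.cases_tail with h | ⟨c, -, hc⟩
            · exact absurd h.symm h12
            · exact (hHU _ _ hc).2
          obtain ⟨hX, -⟩ := hcaseA u₁ hu₁U
          obtain ⟨-, hY⟩ := hcaseA u₂ hu₂U
          set X := wball H w U u₁ (k*ω) with hXdef
          set Y := wiball H w U u₂ (k*ω) with hYdef
          have hXU : X ⊆ U := wball_subset
          have hYU : Y ⊆ U := wiball_subset
          have hinter : (X ∩ Y).Nonempty := by
            by_contra hcon
            rw [Finset.not_nonempty_iff_eq_empty] at hcon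
            have h1 : X.card + Y.card = (X ∪ Y).card := by
              rw [Finset.card_union_of_disjoint (Finset.disjoint_iff_inter_eq_empty.mpr hcon)]
            have h2 : (X ∪ Y).card ≤ U.card := Finset.card_le_card (Finset.union_subset hXU hYU)
            omega
          obtain ⟨x, hx⟩ := hinter
          rw [Finset.mem_inter] at hx
          have hx1 : wdist H w u₁ x ≤ ((k*ω : ℕ) : ℕ∞) := (mem_wball.mp hx.1).2
          have hx2 : wdist H w x u₂ ≤ ((k*ω : ℕ) : ℕ∞) := (mem_wiball.mp hx.2).2
          have hd12 : wdist H w u₁ u₂ ≤ (d : ℕ∞) := by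
            calc wdist H w u₁ u₂ ≤ wdist H w u₁ x + wdist H w x u₂ := wdist_triangle H w u₁ x u₂
              _ ≤ ((k*ω : ℕ) : ℕ∞) + ((k*ω : ℕ) : ℕ∞) := add_le_add hx1 hx2
              _ = (d : ℕ∞) := by rw [hd]; push_cast; ring
          obtain ⟨l, hlc, hlh, hll, hlw⟩ := wdist_le_iff.mp hd12
          have hmem : ∀ x ∈ l, x ∈ scc H v := by
            intro y hy
            have h1 : Relation.ReflTransGen H u₁ y := chain_head_reach l u₁ hlc hlh y hy
            have h2 : Relation.ReflTransGen H y u₂ := chain_last_reach l u₂ hlc hll y hy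
            exact ⟨h2.trans hu₂.1, hu₁.2.trans h1⟩
          have hchain : l.Chain' (induced H (scc H v)) := chain'_restrict hlc hmem
          exact (wdist_le hchain hlh hll).trans (by exact_mod_cast hlw)
        · simp only [Finset.card_empty, Nat.cast_zero]
          apply mul_nonneg hε0
          apply Finset.sum_nonneg
          intro v hv
          set G : V → V → Prop := edgesAvoiding (induced E ↑U) ↑(∅ : Finset V) with hGdef
          have hsub : scc G v ⊆ ↑U :=
            scc_subset_of_mem (fun a b hab => ⟨hab.1.2.1, hab.1.2.2⟩) (Finset.mem_coe.mpr hv)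
          have h1 : 1 ≤ (scc G v).ncard :=
            (Set.ncard_pos (Set.toFinite _)).mpr ⟨v, mem_scc_self G v⟩
          have h2 : (scc G v).ncard ≤ U.card := by
            have := Set.ncard_le_ncard hsub (Set.toFinite _)
            rwa [Set.ncard_coe_finset] at this
          have := logb_mono_nat h1 h2
          linarith

end Main

/-- the WPartition lemma (existence content). -/
theorem stmt9 {V : Type*} [Fintype V] (E : V → V → Prop) (w : V → V → ℕ) (ω : ℕ)
    (hw : ∀ a b, E a b → 1 ≤ w a b ∧ w a b < ω)
    (d : ℕ) (hd : 1 ≤ d) (hdiv : 2 * ω ∣ d) :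
    ∃ S : Set V,
      (∀ v : V, ∀ u₁ ∈ scc (edgesAvoiding E S) v, ∀ u₂ ∈ scc (edgesAvoiding E S) v,
        wdist (induced (edgesAvoiding E S) (scc (edgesAvoiding E S) v)) w u₁ u₂ ≤ (d : ℕ∞)) ∧
      (S.ncard : ℝ) ≤ (4 * ω * Real.logb 2 (Fintype.card V) / d) *
        ∑ C ∈ sccs (edgesAvoiding E S),
          (C.ncard : ℝ) * (Real.logb 2 (Fintype.card V) - Real.logb 2 C.ncard) := by
  classical
  obtain ⟨k, hk⟩ := hdiv
  have hω : 1 ≤ ω := by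
    rcases Nat.eq_zero_or_pos ω with h | h
    · subst h; simp at hk; omega
    · exact h
  have hk1 : 1 ≤ k := by
    rcases Nat.eq_zero_or_pos k with h | h
    · subst h; simp at hk; omega
    · exact h
  set n := Fintype.card V with hn
  by_cases hn1 : n ≤ 1
  · refine ⟨∅, ?_, ?_⟩
    · intro v u₁ _ u₂ _
      have hsub : Subsingleton V := by
        rw [← Fintype.card_le_one_iff_subsingleton]; exact hn1
      have : u₁ = u₂ := Subsingleton.elim u₁ u₂
      subst this
      exact (wdist_self_le_zero _ _ _).trans zero_le
    · rw [Set.ncard_empty]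
      have hL0 : Real.logb 2 (n : ℝ) = 0 := by
        interval_cases n
        · simp
        · simp
      rw [hL0]
      simp
  push_neg at hn1
  have hn2 : 2 ≤ n := hn1
  set L := Real.logb 2 (n : ℝ) with hL
  have hL1 : 1 ≤ L := by
    have h2 : Real.logb 2 ((2:ℕ) : ℝ) ≤ Real.logb 2 (n : ℝ) := logb_mono_nat (by norm_num) hn2
    rw [Nat.cast_two, Real.logb_self_eq_one (by norm_num)] at h2
    exact h2
  have hd0 : (0:ℝ) < d := by exact_mod_cast hd
  have hω0 : (0:ℝ) < ω := by exact_mod_cast hω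
  by_cases hdsmall : (d:ℝ) ≤ 4 * ω * L * L
  · -- take S = univ
    have hnoedge : ∀ a b : V, ¬ edgesAvoiding E Set.univ a b := by
      rintro a b ⟨-, h, -⟩; exact h (Set.mem_univ a)
    have hscc : ∀ v : V, scc (edgesAvoiding E Set.univ) v = {v} :=
      fun v => scc_eq_singleton (fun y => hnoedge y v)
    refine ⟨Set.univ, ?_, ?_⟩
    · intro v
      exact diam_singleton_case (hscc v)
    · rw [sum_sccs_eq]
      have hsum : ∑ v : V, (Real.logb 2 (n:ℝ)
          - Real.logb 2 ((scc (edgesAvoiding E Set.univ) v).ncard : ℝ)) = n * L := by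
        rw [Finset.sum_congr rfl (fun v _ => by rw [hscc v, Set.ncard_singleton])]
        simp [hL, Finset.card_univ, hn]
      rw [hsum]
      have hncard : (Set.univ : Set V).ncard = n := by
        rw [Set.ncard_univ, Nat.card_eq_fintype_card]
      rw [hncard]
      rw [div_mul_eq_mul_div, le_div_iff₀ hd0]
      have hn0 : (0:ℝ) ≤ n := by positivity
      nlinarith [hdsmall, hn0, hL1]
  · push_neg at hdsmall
    set ε : ℝ := 4 * ω * L / d with hεdef
    have hε0 : 0 ≤ ε := by
      apply div_nonneg _ (le_of_lt hd0)
      positivity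
    have hε1 : ε ≤ 1 := by
      rw [hεdef, div_le_one hd0]
      nlinarith [hω0, hL1]
    have hdcast : (d:ℝ) = 2 * ω * k := by exact_mod_cast hk
    have hk0 : (0:ℝ) < k := by exact_mod_cast hk1
    have hεk : Real.logb 2 (n:ℝ) ≤ k * ε / 2 := by
      have : (k:ℝ) * ε / 2 = L := by
        rw [hεdef, hdcast]
        field_simp
        ring
      rw [this]
    have hpow := pow_ge_of_eps hε0 hε1 (by omega : 1 ≤ n) hεk
    obtain ⟨S, hSsub, hdiam, hsum⟩ := claim_main E w ω k d
      (fun a b h => le_of_lt (hw a b h).2) hk ε hε0 hpow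
      (Fintype.card V) Finset.univ (by simp)
    have hEuniv : induced E ↑(Finset.univ : Finset V) = E := by
      funext a b; apply propext; simp [induced]
    rw [hEuniv] at hdiam hsum
    refine ⟨↑S, hdiam, ?_⟩
    rw [sum_sccs_eq, Set.ncard_coe_finset]
    have hcu : (Finset.univ : Finset V).card = n := Finset.card_univ
    rw [hcu] at hsum
    exact hsum
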